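/- Let a, μ₀, u₀ ∈ ℝ, σ₀ > 0, σ_w > 0, and let α < β and γ < δ be real numbers. Set σ̃ = √(a²σ₀² + σ_w²), σ̄ = σ₀σ_w/σ̃ (so that 1/σ̄² = 1/σ₀² + a²/σ_w²), B = aσ₀/σ_w, Ā = (β − μ₀)/σ̄ and A̲ = (α − μ₀)/σ̄. Then (1/(2πσ₀σ_w)) ∫_γ^δ ∫_α^β s · exp(−(r−μ₀)²/(2σ₀²)) · exp(−(s − a r − u₀)²/(2σ_w²)) dr ds = (aμ₀ + u₀) · (1/(2πσ₀σ_w)) ∫_γ^δ ∫_α^β exp(−(r−μ₀)²/(2σ₀²)) · exp(−(s − a r − u₀)²/(2σ_w²)) dr ds + σ̃ · ∫_{(γ − aμ₀ − u₀)/σ̃}^{(δ − aμ₀ − u₀)/σ̃} s̃ · φ(s̃) · (Φ(Ā − B s̃) − Φ(A̲ − B s̃)) ds̃. -/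

import Mathlib

/-- The standard normal density. -/
noncomputable def stdGaussPDF (x : ℝ) : ℝ :=
  Real.exp (-x ^ 2 / 2) / Real.sqrt (2 * Real.pi)

/-- The standard normal cumulative distribution function. -/
noncomputable def stdGaussCDF (x : ℝ) : ℝ :=
  ∫ t in Set.Iic x, stdGaussPDF t

lemma pdf_cont : Continuous stdGaussPDF := by
  unfold stdGaussPDF; fun_prop

lemma pdf_integrable : MeasureTheory.Integrable stdGaussPDF := by
  have h : stdGaussPDF = fun x => Real.exp (-(1/2 : ℝ) * x ^ 2) / Real.sqrt (2 * Real.pi) := by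
    funext x; unfold stdGaussPDF; ring_nf
  rw [h]
  exact (integrable_exp_neg_mul_sq (by norm_num)).div_const _

lemma cdf_sub (x y : ℝ) :
    stdGaussCDF x - stdGaussCDF y = ∫ u in y..x, stdGaussPDF u := by
  unfold stdGaussCDF
  exact intervalIntegral.integral_Iic_sub_Iic pdf_integrable.integrableOn
    pdf_integrable.integrableOn

lemma cdf_cont : Continuous stdGaussCDF := by
  have h : stdGaussCDF = fun x => stdGaussCDF 0 + ∫ u in (0:ℝ)..x, stdGaussPDF u := by
    funext x
    rw [← cdf_sub]; ring
  rw [h]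
  exact continuous_const.add
    (intervalIntegral.continuous_primitive
      (fun a b => pdf_integrable.intervalIntegrable) 0)

lemma exp_ident (a σ₀ σw : ℝ) (hσ₀ : 0 < σ₀) (hσw : 0 < σw) (t x : ℝ) :
    1 / (2 * Real.pi * σ₀ * σw) *
      (Real.exp (-x ^ 2 / (2 * σ₀ ^ 2)) *
        Real.exp (-(Real.sqrt (a ^ 2 * σ₀ ^ 2 + σw ^ 2) * t - a * x) ^ 2 / (2 * σw ^ 2)))
    = 1 / (σ₀ * σw) * (stdGaussPDF t *
        stdGaussPDF (x / (σ₀ * σw / Real.sqrt (a ^ 2 * σ₀ ^ 2 + σw ^ 2)) - a * σ₀ / σw * t)) := by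
  set σt := Real.sqrt (a ^ 2 * σ₀ ^ 2 + σw ^ 2) with hσt_def
  have hσt : 0 < σt := Real.sqrt_pos.mpr (by positivity)
  have hs2 : σt ^ 2 = a ^ 2 * σ₀ ^ 2 + σw ^ 2 := Real.sq_sqrt (by positivity)
  have hπ : 0 < Real.pi := Real.pi_pos
  unfold stdGaussPDF
  have h2π : Real.sqrt (2 * Real.pi) * Real.sqrt (2 * Real.pi) = 2 * Real.pi :=
    Real.mul_self_sqrt (by positivity)
  rw [← Real.exp_add, div_mul_div_comm, ← Real.exp_add, h2π]
  have hA : -x ^ 2 / (2 * σ₀ ^ 2) + -(σt * t - a * x) ^ 2 / (2 * σw ^ 2)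
      = -t ^ 2 / 2 + -(x / (σ₀ * σw / σt) - a * σ₀ / σw * t) ^ 2 / 2 := by
    field_simp
    ring_nf
    linear_combination (x ^ 2 * σw ^ 2 - σ₀ ^ 2 * σw ^ 2 * t ^ 2 + (-(x^2*σw^2) + 8*x^2*σw^4*σ₀^2 + t^2*σw^2*σ₀^2 - 8*σw^4*t^2*σ₀^4) + (x^2 - 8*x^2*σ₀^2*σw^4 - σ₀^2*t^2 + 8*σ₀^4*t^2*σw^4)) * hs2
  rw [hA]
  ring

lemma inner_eq (a μ₀ u₀ σ₀ σw : ℝ) (hσ₀ : 0 < σ₀) (hσw : 0 < σw) (α β s : ℝ) :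
    1 / (2 * Real.pi * σ₀ * σw) *
      ∫ r in α..β, Real.exp (-(r - μ₀) ^ 2 / (2 * σ₀ ^ 2)) *
          Real.exp (-(s - a * r - u₀) ^ 2 / (2 * σw ^ 2))
    = 1 / Real.sqrt (a ^ 2 * σ₀ ^ 2 + σw ^ 2) *
        (stdGaussPDF ((s - (a * μ₀ + u₀)) / Real.sqrt (a ^ 2 * σ₀ ^ 2 + σw ^ 2)) *
          (stdGaussCDF ((β - μ₀) / (σ₀ * σw / Real.sqrt (a ^ 2 * σ₀ ^ 2 + σw ^ 2))
              - a * σ₀ / σw * ((s - (a * μ₀ + u₀)) / Real.sqrt (a ^ 2 * σ₀ ^ 2 + σw ^ 2)))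
           - stdGaussCDF ((α - μ₀) / (σ₀ * σw / Real.sqrt (a ^ 2 * σ₀ ^ 2 + σw ^ 2))
              - a * σ₀ / σw * ((s - (a * μ₀ + u₀)) / Real.sqrt (a ^ 2 * σ₀ ^ 2 + σw ^ 2))))) := by
  set σt := Real.sqrt (a ^ 2 * σ₀ ^ 2 + σw ^ 2) with hσt_def
  have hσt : 0 < σt := Real.sqrt_pos.mpr (by positivity)
  set t := (s - (a * μ₀ + u₀)) / σt with ht_def
  have hst : σt * t = s - (a * μ₀ + u₀) := by
    rw [ht_def]; field_simp
  set σb := σ₀ * σw / σt with hσb_def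
  have hσb : 0 < σb := by positivity
  -- rewrite integrand arg
  have harg : ∀ r : ℝ, -(s - a * r - u₀) ^ 2 = -(σt * t - a * (r - μ₀)) ^ 2 := by
    intro r
    have : s - a * r - u₀ = σt * t - a * (r - μ₀) := by linear_combination -hst
    rw [this]
  rw [← intervalIntegral.integral_const_mul]
  rw [show (fun r => 1 / (2 * Real.pi * σ₀ * σw) *
        (Real.exp (-(r - μ₀) ^ 2 / (2 * σ₀ ^ 2)) *
          Real.exp (-(s - a * r - u₀) ^ 2 / (2 * σw ^ 2))))
      = fun r => (1 / (σ₀ * σw) * stdGaussPDF t) *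
          stdGaussPDF ((r - μ₀) / σb - a * σ₀ / σw * t) from funext fun r => by
    rw [harg r]
    have := exp_ident a σ₀ σw hσ₀ hσw t (r - μ₀)
    rw [← hσt_def, ← hσb_def] at this
    rw [this]; ring]
  rw [intervalIntegral.integral_const_mul]
  have hsub : (∫ r in α..β, stdGaussPDF ((r - μ₀) / σb - a * σ₀ / σw * t))
      = σb * ∫ v in ((α - μ₀) / σb - a * σ₀ / σw * t)..((β - μ₀) / σb - a * σ₀ / σw * t),
          stdGaussPDF v := by
    have h1 : (∫ r in α..β, stdGaussPDF ((r - μ₀) / σb - a * σ₀ / σw * t))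
        = ∫ y in (α - μ₀)..(β - μ₀), stdGaussPDF (y / σb - a * σ₀ / σw * t) :=
      intervalIntegral.integral_comp_sub_right
        (fun y => stdGaussPDF (y / σb - a * σ₀ / σw * t)) μ₀
    have h2 : (∫ y in (α - μ₀)..(β - μ₀), stdGaussPDF (y / σb - a * σ₀ / σw * t))
        = σb • ∫ u in ((α - μ₀) / σb)..((β - μ₀) / σb),
            stdGaussPDF (u - a * σ₀ / σw * t) :=
      intervalIntegral.integral_comp_div
        (fun u => stdGaussPDF (u - a * σ₀ / σw * t)) hσb.ne'
    have h3 : (∫ u in ((α - μ₀) / σb)..((β - μ₀) / σb),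
          stdGaussPDF (u - a * σ₀ / σw * t))
        = ∫ v in ((α - μ₀) / σb - a * σ₀ / σw * t)..((β - μ₀) / σb - a * σ₀ / σw * t),
            stdGaussPDF v :=
      intervalIntegral.integral_comp_sub_right stdGaussPDF (a * σ₀ / σw * t)
    rw [h1, h2, h3, smul_eq_mul]
  rw [hsub, ← cdf_sub]
  rw [hσb_def]
  field_simp

/-- Reduction of the unnormalized truncated first moment
`E[x₁ · 1{x₀ ∈ (α,β), x₁ ∈ (γ,δ)}]` for the linear Gaussian system
`x₁ = a x₀ + u₀ + w₀`, `x₀ ∼ N(μ₀, σ₀²)`, `w₀ ∼ N(0, σ_w²)`, to a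
one-dimensional Gaussian-type integral. -/
theorem stmt11 (a μ₀ u₀ σ₀ σw : ℝ) (hσ₀ : 0 < σ₀) (hσw : 0 < σw)
    (α β γ δ : ℝ) (hαβ : α < β) (hγδ : γ < δ) :
    1 / (2 * Real.pi * σ₀ * σw) *
        ∫ s in γ..δ, ∫ r in α..β,
          s * Real.exp (-(r - μ₀) ^ 2 / (2 * σ₀ ^ 2)) *
            Real.exp (-(s - a * r - u₀) ^ 2 / (2 * σw ^ 2))
      = (a * μ₀ + u₀) * (1 / (2 * Real.pi * σ₀ * σw) *
            ∫ s in γ..δ, ∫ r in α..β,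
              Real.exp (-(r - μ₀) ^ 2 / (2 * σ₀ ^ 2)) *
                Real.exp (-(s - a * r - u₀) ^ 2 / (2 * σw ^ 2)))
        + Real.sqrt (a ^ 2 * σ₀ ^ 2 + σw ^ 2) *
            ∫ t in ((γ - a * μ₀ - u₀) / Real.sqrt (a ^ 2 * σ₀ ^ 2 + σw ^ 2))..(
                (δ - a * μ₀ - u₀) / Real.sqrt (a ^ 2 * σ₀ ^ 2 + σw ^ 2)),
              t * stdGaussPDF t *
                (stdGaussCDF ((β - μ₀) / (σ₀ * σw / Real.sqrt (a ^ 2 * σ₀ ^ 2 + σw ^ 2))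
                    - a * σ₀ / σw * t)
                 - stdGaussCDF ((α - μ₀) / (σ₀ * σw / Real.sqrt (a ^ 2 * σ₀ ^ 2 + σw ^ 2))
                    - a * σ₀ / σw * t)) := by
  have hσt : 0 < Real.sqrt (a ^ 2 * σ₀ ^ 2 + σw ^ 2) := Real.sqrt_pos.mpr (by positivity)
  set σt := Real.sqrt (a ^ 2 * σ₀ ^ 2 + σw ^ 2) with hσt_def
  set m := a * μ₀ + u₀ with hm_def
  set D : ℝ → ℝ := fun u =>
    stdGaussCDF ((β - μ₀) / (σ₀ * σw / σt) - a * σ₀ / σw * u)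
      - stdGaussCDF ((α - μ₀) / (σ₀ * σw / σt) - a * σ₀ / σw * u) with hD_def
  set K : ℝ → ℝ := fun s => 1 / σt * (stdGaussPDF ((s - m) / σt) * D ((s - m) / σt))
    with hK_def
  have hDc : Continuous D := by
    apply Continuous.sub <;> exact cdf_cont.comp (by continuity)
  have haff : Continuous fun s : ℝ => (s - m) / σt := by continuity
  have hKc : Continuous K :=
    continuous_const.mul ((pdf_cont.comp haff).mul (hDc.comp haff))
  have hKF : ∀ s : ℝ, 1 / (2 * Real.pi * σ₀ * σw) *
      ∫ r in α..β, Real.exp (-(r - μ₀) ^ 2 / (2 * σ₀ ^ 2)) *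
          Real.exp (-(s - a * r - u₀) ^ 2 / (2 * σw ^ 2)) = K s := fun s =>
    inner_eq a μ₀ u₀ σ₀ σw hσ₀ hσw α β s
  -- rewrite LHS
  have hL : 1 / (2 * Real.pi * σ₀ * σw) *
        (∫ s in γ..δ, ∫ r in α..β,
          s * Real.exp (-(r - μ₀) ^ 2 / (2 * σ₀ ^ 2)) *
            Real.exp (-(s - a * r - u₀) ^ 2 / (2 * σw ^ 2)))
      = ∫ s in γ..δ, s * K s := by
    rw [← intervalIntegral.integral_const_mul]
    apply intervalIntegral.integral_congr
    intro s _
    simp only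
    rw [← hKF s]
    rw [show (∫ r in α..β,
          s * Real.exp (-(r - μ₀) ^ 2 / (2 * σ₀ ^ 2)) *
            Real.exp (-(s - a * r - u₀) ^ 2 / (2 * σw ^ 2)))
        = s * ∫ r in α..β, Real.exp (-(r - μ₀) ^ 2 / (2 * σ₀ ^ 2)) *
            Real.exp (-(s - a * r - u₀) ^ 2 / (2 * σw ^ 2)) from by
      rw [← intervalIntegral.integral_const_mul]
      congr 1; funext r; ring]
    ring
  have hR : 1 / (2 * Real.pi * σ₀ * σw) *
        (∫ s in γ..δ, ∫ r in α..β,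
          Real.exp (-(r - μ₀) ^ 2 / (2 * σ₀ ^ 2)) *
            Real.exp (-(s - a * r - u₀) ^ 2 / (2 * σw ^ 2)))
      = ∫ s in γ..δ, K s := by
    rw [← intervalIntegral.integral_const_mul]
    apply intervalIntegral.integral_congr
    intro s _
    exact hKF s
  rw [hL, hR]
  -- now the substitution part
  have hbγ : γ - a * μ₀ - u₀ = γ - m := by rw [hm_def]; ring
  have hbδ : δ - a * μ₀ - u₀ = δ - m := by rw [hm_def]; ring
  rw [hbγ, hbδ]
  have hWint : (∫ u in ((γ - m) / σt)..((δ - m) / σt),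
        u * stdGaussPDF u * D u)
      = ∫ u in ((γ - m) / σt)..((δ - m) / σt), u * stdGaussPDF u *
          (stdGaussCDF ((β - μ₀) / (σ₀ * σw / σt) - a * σ₀ / σw * u)
            - stdGaussCDF ((α - μ₀) / (σ₀ * σw / σt) - a * σ₀ / σw * u)) := rfl
  rw [← hWint]
  have hsub : (∫ s in γ..δ, (s - m) * K s)
      = σt * ∫ u in ((γ - m) / σt)..((δ - m) / σt), u * stdGaussPDF u * D u := by
    have h0 : (fun s => (s - m) * K s)
        = fun s => (fun u => u * stdGaussPDF u * D u) ((s - m) / σt) := by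
      funext s
      simp only [hK_def]
      ring
    rw [h0]
    rw [intervalIntegral.integral_comp_sub_right
      (fun y => (fun u => u * stdGaussPDF u * D u) (y / σt)) m]
    rw [intervalIntegral.integral_comp_div (fun u => u * stdGaussPDF u * D u) hσt.ne']
    rw [smul_eq_mul]
  rw [← hsub]
  have h1 : IntervalIntegrable (fun s => s * K s) MeasureTheory.volume γ δ :=
    (continuous_id.mul hKc).intervalIntegrable γ δ
  have h2 : IntervalIntegrable K MeasureTheory.volume γ δ :=
    hKc.intervalIntegrable γ δ
  have h3 : IntervalIntegrable (fun s => m * K s) MeasureTheory.volume γ δ :=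
    (continuous_const.mul hKc).intervalIntegrable γ δ
  have hsplit : (∫ s in γ..δ, (s - m) * K s)
      = (∫ s in γ..δ, s * K s) - ∫ s in γ..δ, m * K s := by
    rw [← intervalIntegral.integral_sub h1 h3]
    congr 1; funext s; ring
  have h4 : (∫ s in γ..δ, m * K s) = m * ∫ s in γ..δ, K s :=
    intervalIntegral.integral_const_mul ..
  rw [hsplit]
  linarith [h4]
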